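/- Define f = q·∏_{n≥1}(1+q^n)^{24}, P = 1 + 24·Σ_{n≥1} σ₁^odd(n) q^n, and S = Σ_{n≥1} σ₋₃^odd(n) q^n in ℚ[[q]], and let (b_n)_{n≥0} and (a_n)_{n≥0} be the unique sequences of rational numbers with P = Σ_{n≥0} b_n f^n and P·S = Σ_{n≥0} a_n f^n. Then for every n ≥ 0: b_n ∈ ℤ, and L_n^3 · a_n ∈ ℤ, where L_n = lcm(1, 2, …, n) (with L_0 = 1). -/

import Mathlib

open PowerSeries

namespace Stmt8

def A : Subring ℚ := (Int.castRingHom ℚ).range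

lemma mem_A {x : ℚ} : x ∈ A ↔ ∃ m : ℤ, x = m := by
  constructor
  · rintro ⟨m, hm⟩; exact ⟨m, hm.symm⟩
  · rintro ⟨m, hm⟩; exact ⟨m, hm.symm⟩

lemma natCast_mem_A (n : ℕ) : (n : ℚ) ∈ A := ⟨n, by simp⟩

/-- Power series all of whose coefficients are integers form a subring. -/
noncomputable def SA : Subring (PowerSeries ℚ) where
  carrier := {g | ∀ n, coeff n g ∈ A}
  zero_mem' := by intro n; simp only [map_zero]; exact A.zero_mem
  one_mem' := by
    intro n; rw [coeff_one]
    split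
    · exact A.one_mem
    · exact A.zero_mem
  add_mem' := by
    intro x y hx hy n; rw [map_add]; exact A.add_mem (hx n) (hy n)
  neg_mem' := by
    intro x hx n; rw [map_neg]; exact A.neg_mem (hx n)
  mul_mem' := by
    intro x y hx hy n; rw [coeff_mul]
    exact A.sum_mem fun p _ => A.mul_mem (hx _) (hy _)

lemma X_mem_SA : (X : PowerSeries ℚ) ∈ SA := by
  intro n; rw [coeff_X]
  split
  · exact A.one_mem
  · exact A.zero_mem

section Main

variable {f : PowerSeries ℚ}
variable (hf : ∀ N, coeff N f = coeff N (X * ∏ n ∈ Finset.Icc 1 N, (1 + X ^ n) ^ 24))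

include hf

lemma coeff_f_mem (n : ℕ) : coeff n f ∈ A := by
  rw [hf n]
  refine (SA.mul_mem X_mem_SA (SA.prod_mem fun k _ => SA.pow_mem
    (SA.add_mem SA.one_mem (SA.pow_mem X_mem_SA k)) 24)) n

lemma coeff_zero_f : coeff 0 f = 0 := by
  rw [hf 0]
  simp [coeff_zero_eq_constantCoeff, map_mul]

lemma coeff_one_f : coeff 1 f = 1 := by
  rw [hf 1, coeff_succ_X_mul]
  simp [coeff_zero_eq_constantCoeff]

/-- the "divided by X" series -/
private noncomputable def g (f : PowerSeries ℚ) : PowerSeries ℚ :=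
  PowerSeries.mk fun n => coeff (n + 1) f

lemma f_eq_X_mul_g : f = X * g f := by
  ext n
  cases n with
  | zero => rw [coeff_zero_f hf]; simp [coeff_zero_eq_constantCoeff, map_mul]
  | succ n => rw [coeff_succ_X_mul]; simp [g]

lemma coeff_f_pow_self (k : ℕ) : coeff k (f ^ k) = 1 := by
  have hg : f ^ k = X ^ k * (g f) ^ k := by rw [← mul_pow, ← f_eq_X_mul_g hf]
  rw [hg]
  have := coeff_X_pow_mul ((g f) ^ k) k 0
  rw [zero_add] at this
  rw [this, coeff_zero_eq_constantCoeff, map_pow]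
  have : constantCoeff (g f) = 1 := by
    simp [g, coeff_zero_eq_constantCoeff.symm, coeff_one_f hf]
  rw [this, one_pow]

lemma coeff_f_pow_mem (k n : ℕ) : coeff n (f ^ k) ∈ A :=
  (SA.pow_mem (coeff_f_mem hf) k) n

/-- Triangular extraction: the coefficient recursion. -/
lemma extract (c : ℕ → ℚ) (G : PowerSeries ℚ)
    (h : ∀ N, coeff N G = coeff N (∑ n ∈ Finset.range (N + 1), C (c n) * f ^ n))
    (N : ℕ) :
    c N = coeff N G - ∑ k ∈ Finset.range N, c k * coeff N (f ^ k) := by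
  have h1 : coeff N G = ∑ k ∈ Finset.range (N + 1), c k * coeff N (f ^ k) := by
    rw [h N, map_sum]
    refine Finset.sum_congr rfl fun k _ => ?_
    rw [coeff_C_mul]
  rw [Finset.sum_range_succ, coeff_f_pow_self hf, mul_one] at h1
  linarith [h1]

end Main

end Stmt8

open Stmt8 in
open PowerSeries in
theorem stmt_8 (f P S : PowerSeries ℚ) (a b : ℕ → ℚ)
    (hf : ∀ N, coeff N f = coeff N (X * ∏ n ∈ Finset.Icc 1 N, (1 + X ^ n) ^ 24))
    (hP : P = PowerSeries.mk fun n =>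
      if n = 0 then 1 else 24 * ∑ d ∈ n.divisors.filter (fun d => Odd d), (d : ℚ))
    (hS : S = PowerSeries.mk fun n =>
      ∑ d ∈ n.divisors.filter (fun d => Odd d), (d : ℚ) ^ (-3 : ℤ))
    (hb : ∀ N, coeff N P = coeff N (∑ n ∈ Finset.range (N + 1), C (b n) * f ^ n))
    (ha : ∀ N, coeff N (P * S) = coeff N (∑ n ∈ Finset.range (N + 1), C (a n) * f ^ n)) :
    ∀ n, (∃ m : ℤ, b n = m) ∧
      ∃ m : ℤ, (((Finset.Icc 1 n).lcm id : ℕ) : ℚ) ^ 3 * a n = m := by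
  -- notation for lcm
  set L : ℕ → ℕ := fun n => (Finset.Icc 1 n).lcm id with hL
  have hLaux : ∀ s : Finset ℕ, (∀ x ∈ s, x ≠ 0) → s.lcm id ≠ 0 := by
    intro s
    induction s using Finset.induction with
    | empty => intro _; simp
    | @insert y t hy ih =>
      intro h
      rw [Finset.lcm_insert, id, lcm_eq_nat_lcm]
      exact Nat.lcm_ne_zero (h _ (Finset.mem_insert_self _ _))
        (ih fun x hx => h x (Finset.mem_insert_of_mem hx))
  have hLne : ∀ n, L n ≠ 0 := by
    intro n
    exact hLaux _ fun x hx => by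
      have := (Finset.mem_Icc.mp hx).1; omega
  have hLdvd : ∀ {k n : ℕ}, k ≤ n → L k ∣ L n := by
    intro k n hkn
    refine Finset.lcm_dvd fun d hd => ?_
    exact Finset.dvd_lcm (Finset.mem_of_subset (Finset.Icc_subset_Icc_right hkn) hd)
  have hdvdL : ∀ {d n : ℕ}, 1 ≤ d → d ≤ n → d ∣ L n := fun h1 h2 =>
    Finset.dvd_lcm (Finset.mem_Icc.mpr ⟨h1, h2⟩)
  -- integrality of coefficients of P
  have hPmem : ∀ n, coeff n P ∈ A := by
    intro n
    rw [hP, coeff_mk]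
    split
    · exact A.one_mem
    · exact A.mul_mem (natCast_mem_A 24) (A.sum_mem fun d _ => natCast_mem_A d)
  -- L n ^ 3 * coeff j S ∈ A for j ≤ n
  have hSmem : ∀ {j n : ℕ}, j ≤ n → ((L n : ℚ)) ^ 3 * coeff j S ∈ A := by
    intro j n hjn
    rw [hS, coeff_mk, Finset.mul_sum]
    refine A.sum_mem fun d hd => ?_
    rw [Finset.mem_filter] at hd
    obtain ⟨hd1, _⟩ := hd
    have hdj : d ∣ j := Nat.mem_divisors.mp hd1 |>.1
    have hjne : j ≠ 0 := Nat.mem_divisors.mp hd1 |>.2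
    have hd0 : 1 ≤ d := Nat.pos_of_mem_divisors hd1
    have hdn : d ≤ n := le_trans (Nat.le_of_dvd (Nat.pos_of_ne_zero hjne) hdj) hjn
    have hdL : d ∣ L n := hdvdL hd0 hdn
    have hdQ : (d : ℚ) ≠ 0 := by positivity
    have key : (L n : ℚ) ^ 3 * (d : ℚ) ^ (-3 : ℤ) = ((L n / d : ℕ) : ℚ) ^ 3 := by
      rw [Nat.cast_div hdL hdQ, zpow_neg, div_pow]
      field_simp
    rw [key]
    exact A.pow_mem (natCast_mem_A _) 3
  -- L n ^ 3 * coeff n (P * S) ∈ A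
  have hPSmem : ∀ n, ((L n : ℚ)) ^ 3 * coeff n (P * S) ∈ A := by
    intro n
    rw [coeff_mul, Finset.mul_sum]
    refine A.sum_mem fun p hp => ?_
    have hple : p.2 ≤ n := by
      have := Finset.HasAntidiagonal.mem_antidiagonal.mp hp
      omega
    have : (L n : ℚ) ^ 3 * (coeff p.1 P * coeff p.2 S) =
        coeff p.1 P * ((L n : ℚ) ^ 3 * coeff p.2 S) := by ring
    rw [this]
    exact A.mul_mem (hPmem _) (hSmem hple)
  -- main strong induction
  intro n
  induction n using Nat.strong_induction_on with
  | _ n ih =>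
    constructor
    · rw [← mem_A]
      rw [extract hf b P hb n]
      refine A.sub_mem (hPmem n) (A.sum_mem fun k hk => ?_)
      have hbk : b k ∈ A := mem_A.mpr (ih k (Finset.mem_range.mp hk)).1
      exact A.mul_mem hbk (coeff_f_pow_mem hf k n)
    · rw [← mem_A]
      rw [extract hf a (P * S) ha n, mul_sub, Finset.mul_sum]
      refine A.sub_mem (hPSmem n) (A.sum_mem fun k hk => ?_)
      have hkn : k < n := Finset.mem_range.mp hk
      have hak : (L k : ℚ) ^ 3 * a k ∈ A := mem_A.mpr (ih k hkn).2
      have hdl : L k ∣ L n := hLdvd (le_of_lt hkn)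
      have hLkQ : (L k : ℚ) ≠ 0 := by
        exact_mod_cast hLne k
      have key : (L n : ℚ) ^ 3 * (a k * coeff n (f ^ k)) =
          ((L n / L k : ℕ) : ℚ) ^ 3 * ((L k : ℚ) ^ 3 * a k) * coeff n (f ^ k) := by
        rw [Nat.cast_div hdl hLkQ]
        field_simp
      rw [key]
      exact A.mul_mem (A.mul_mem (A.pow_mem (natCast_mem_A _) 3) hak)
        (coeff_f_pow_mem hf k n)
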